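/- Every finite constructible graph is cop-win: if a finite reflexive graph admits a dominating order then the cop has a winning strategy. -/

import Mathlib

structure RefGraph (V : Type*) where
  Adj : V → V → Prop
  symm : ∀ u v, Adj u v → Adj v u
  refl : ∀ v, Adj v v

/-- The sequence of cop positions when the cop starts at `c0`, plays the
(positional) strategy `S`, and the robber's positions are given by `rb`
(`rb 0` is the robber's starting vertex, chosen after seeing `c0`;
the cop's `(n+1)`-st position responds to the robber's position `rb n`). -/
def copSeq {V : Type*} (S : V → V → V) (c0 : V) (rb : ℕ → V) : ℕ → V
  | 0 => c0
  | n + 1 => S (copSeq S c0 rb n) (rb n)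

/-- A legal robber play: consecutive positions are adjacent (staying put is
allowed since graphs are reflexive). -/
def LegalPlay {V : Type*} (G : RefGraph V) (rb : ℕ → V) : Prop :=
  ∀ n, G.Adj (rb n) (rb (n + 1))

/-- The cop playing `S` from `c0` catches the robber play `rb`: at some point
cop and robber occupy the same vertex. -/
def Catches {V : Type*} (S : V → V → V) (c0 : V) (rb : ℕ → V) : Prop :=
  ∃ n, copSeq S c0 rb n = rb n ∨ copSeq S c0 rb (n + 1) = rb n

/-- `(c0, S)` is a winning strategy for the cop on `G`: all moves are legal and
every legal robber play is caught after finitely many rounds. -/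
def WinningStrat {V : Type*} (G : RefGraph V) (c0 : V) (S : V → V → V) : Prop :=
  (∀ c r, G.Adj c (S c r)) ∧ ∀ rb : ℕ → V, LegalPlay G rb → Catches S c0 rb

/-- `G` is cop-win: the cop has a winning strategy. -/
def CopWin {V : Type*} (G : RefGraph V) : Prop :=
  ∃ (c0 : V) (S : V → V → V), WinningStrat G c0 S

/-- `r` (a strict order relation) is a dominating order for `G`: every vertex `ν`
which is not minimal is dominated in `G_{≤ν}` by some earlier vertex. -/
def IsDomOrder {V : Type*} (G : RefGraph V) (r : V → V → Prop) : Prop :=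
  ∀ ν, (∃ μ, r μ ν) →
    ∃ μ, r μ ν ∧ G.Adj μ ν ∧ ∀ η, (r η ν ∨ η = ν) → G.Adj ν η → G.Adj μ η

/-- `G` is constructible: some well order of the vertex set is a dominating order. -/
def Constructible {V : Type*} (G : RefGraph V) : Prop :=
  ∃ r : V → V → Prop, IsWellOrder V r ∧ IsDomOrder G r

noncomputable section
open Classical

/-- `WinOn G A n c r`: with play confined to `A`, the cop at `c` (to move)
can catch a robber at `r` within `n` cop moves. -/
def WinOn {V : Type*} (G : RefGraph V) (A : Finset V) : ℕ → V → V → Prop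
  | 0 => fun c r => c = r
  | n+1 => fun c r => c = r ∨ ∃ c' ∈ A, G.Adj c c' ∧
      (c' = r ∨ ∀ r' ∈ A, G.Adj r r' → WinOn G A n c' r')

lemma winOn_succ_of {V : Type*} (G : RefGraph V) (A : Finset V) :
    ∀ n c r, WinOn G A n c r → WinOn G A (n+1) c r := by
  intro n
  induction n with
  | zero => intro c r h; exact Or.inl h
  | succ n ih =>
    intro c r h
    rcases h with h | ⟨c', hc', hadj, h⟩
    · exact Or.inl h
    · refine Or.inr ⟨c', hc', hadj, ?_⟩
      rcases h with h | h
      · exact Or.inl h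
      · exact Or.inr fun r' hr' ha => ih _ _ (h r' hr' ha)

lemma winOn_mono {V : Type*} (G : RefGraph V) (A : Finset V) {m n c r} (hmn : m ≤ n)
    (h : WinOn G A m c r) : WinOn G A n c r := by
  induction hmn with
  | refl => exact h
  | step _ ih => exact winOn_succ_of G A _ _ _ ih

lemma winOn_shadow {V : Type*} (G : RefGraph V) (A : Finset V) (t μ : V)
    (hμA : μ ∈ A) (hμt : μ ≠ t) (hadjμt : G.Adj μ t)
    (hdom : ∀ η ∈ A, G.Adj t η → G.Adj μ η) :
    ∀ n c r, r ∈ A →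
      WinOn G (A.erase t) n c (if r = t then μ else r) → WinOn G A (n+2) c r := by
  have πmem : ∀ z ∈ A, (if z = t then μ else z) ∈ A.erase t := by
    intro z hz
    by_cases hzt : z = t
    · simp only [if_pos hzt]; exact Finset.mem_erase.2 ⟨hμt, hμA⟩
    · simp only [if_neg hzt]; exact Finset.mem_erase.2 ⟨hzt, hz⟩
  have πadj : ∀ x ∈ A, ∀ y ∈ A, G.Adj x y →
      G.Adj (if x = t then μ else x) (if y = t then μ else y) := by
    intro x hx y hy hxy
    by_cases hxt : x = t <;> by_cases hyt : y = t
    · simp only [if_pos hxt, if_pos hyt]; exact G.refl μ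
    · simp only [if_pos hxt, if_neg hyt]; exact hdom y hy (hxt ▸ hxy)
    · simp only [if_neg hxt, if_pos hyt]
      exact G.symm _ _ (hdom x hx (G.symm _ _ (hyt ▸ hxy)))
    · simp only [if_neg hxt, if_neg hyt]; exact hxy
  have hwin1 : ∀ r'' ∈ A, G.Adj t r'' → WinOn G A 1 μ r'' := by
    intro r'' hr'' ha
    exact Or.inr ⟨r'', hr'', hdom r'' hr'' ha, Or.inl rfl⟩
  have base : ∀ c r, r ∈ A → c = (if r = t then μ else r) → WinOn G A 2 c r := by
    intro c r hrA h
    by_cases hrt : r = t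
    · rw [if_pos hrt] at h
      rw [h, hrt]
      exact Or.inr ⟨μ, hμA, G.refl μ, Or.inr fun r'' hr'' ha => hwin1 r'' hr'' ha⟩
    · rw [if_neg hrt] at h
      exact Or.inl h
  intro n
  induction n with
  | zero => intro c r hrA h; exact base c r hrA h
  | succ n ih =>
    intro c r hrA h
    rcases h with h | ⟨c', hc', hadj, h⟩
    · exact winOn_mono G A (show 2 ≤ n + 1 + 2 by omega) (base c r hrA h)
    · have hc'A : c' ∈ A := Finset.mem_of_mem_erase hc'
      rcases h with h | h
      · by_cases hrt : r = t
        · rw [if_pos hrt] at h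
          rw [hrt]
          rw [h] at hadj
          exact Or.inr ⟨μ, hμA, hadj, Or.inr fun r'' hr'' ha =>
            winOn_mono G A (show 1 ≤ n + 2 by omega) (hwin1 r'' hr'' ha)⟩
        · rw [if_neg hrt] at h
          exact Or.inr ⟨c', hc'A, hadj, Or.inl h⟩
      · refine Or.inr ⟨c', hc'A, hadj, Or.inr fun r'' hr'' ha => ?_⟩
        exact ih c' r'' hr'' (h _ (πmem r'' hr'') (πadj r hrA r'' hr'' ha))

lemma exists_winOn {V : Type*} [Fintype V] (G : RefGraph V) (r : V → V → Prop)
    (hwo : IsWellOrder V r) (hd : IsDomOrder G r) :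
    ∀ n (A : Finset V), A.card = n → A.Nonempty →
      (∀ x ∈ A, ∀ y, r y x → y ∈ A) →
      ∃ c0 ∈ A, ∃ N, ∀ z ∈ A, WinOn G A N c0 z := by
  haveI := hwo.toTrichotomous
  haveI : IsTrans V r := @instIsTransOfIsWellOrder _ r hwo
  haveI := hwo.toIsWellFounded
  have hirr : ∀ a : V, ¬ r a a := fun a => irrefl a
  haveI : IsTrans V (flip r) := ⟨fun a b c hab hbc => IsTrans.trans c b a hbc hab⟩
  haveI : IsIrrefl V (flip r) := ⟨fun a => hirr a⟩
  have hwfflip : WellFounded (flip r) := Finite.wellFounded_of_trans_of_irrefl (flip r)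
  intro n
  induction n using Nat.strong_induction_on with
  | _ n ih =>
  intro A hcard hne hdc
  -- maximal element of A
  obtain ⟨t, htA, hmin⟩ := hwfflip.has_min (A : Set V) ⟨hne.choose, hne.choose_spec⟩
  have hmax : ∀ x ∈ A, x ≠ t → r x t := by
    intro x hx hxt
    rcases trichotomous_of r x t with h | h | h
    · exact h
    · exact absurd h hxt
    · exact absurd h (hmin x hx)
  by_cases h1 : A.card ≤ 1
  · refine ⟨t, htA, 0, fun z hz => ?_⟩
    exact Finset.card_le_one.1 h1 t htA z hz
  · push_neg at h1
    obtain ⟨x, hxA, hxt⟩ := Finset.exists_mem_ne h1 t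
    obtain ⟨μ, hrμt, hadjμt, hdomfull⟩ := hd t ⟨x, hmax x hxA hxt⟩
    have hμA : μ ∈ A := hdc t htA μ hrμt
    have hμt : μ ≠ t := fun h => hirr t (h ▸ hrμt)
    have hdom : ∀ η ∈ A, G.Adj t η → G.Adj μ η := by
      intro η hη hadj
      by_cases hηt : η = t
      · exact hηt ▸ hadjμt
      · exact hdomfull η (Or.inl (hmax η hη hηt)) hadj
    have hA'ne : (A.erase t).Nonempty := ⟨x, Finset.mem_erase.2 ⟨hxt, hxA⟩⟩
    have hA'dc : ∀ a ∈ A.erase t, ∀ y, r y a → y ∈ A.erase t := by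
      intro a ha y hya
      obtain ⟨hat, haA⟩ := Finset.mem_erase.1 ha
      refine Finset.mem_erase.2 ⟨?_, hdc a haA y hya⟩
      intro hyt
      exact hirr t (_root_.trans (hyt ▸ hya) (hmax a haA hat))
    have hcard' : (A.erase t).card < n := by
      rw [Finset.card_erase_of_mem htA]; omega
    obtain ⟨c0, hc0, N, hwin⟩ := ih _ hcard' (A.erase t) rfl hA'ne hA'dc
    refine ⟨c0, Finset.mem_of_mem_erase hc0, N + 2, fun z hz => ?_⟩
    refine winOn_shadow G A t μ hμA hμt hadjμt hdom N c0 z hz ?_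
    exact hwin _ (by
      by_cases hzt : z = t
      · simp only [if_pos hzt]; exact Finset.mem_erase.2 ⟨hμt, hμA⟩
      · simp only [if_neg hzt]; exact Finset.mem_erase.2 ⟨hzt, hz⟩)

/-- every finite constructible graph is cop-win. -/
theorem copWin_of_constructible {V : Type*} [Fintype V] [Nonempty V] (G : RefGraph V)
    (h : Constructible G) : CopWin G := by
  classical
  obtain ⟨r, hwo, hd⟩ := h
  obtain ⟨c0, -, N, hwin⟩ := exists_winOn G r hwo hd (Finset.univ.card) Finset.univ rfl
    Finset.univ_nonempty (fun x _ y _ => Finset.mem_univ y)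
  set W : ℕ → V → V → Prop := fun n c z => WinOn G Finset.univ n c z with hW
  have hS : ∀ c rr : V, ∃ c', G.Adj c c' ∧ ∀ (hh : ∃ n, W n c rr), c ≠ rr →
      (c' = rr ∨ ∀ z, G.Adj rr z → W (Nat.find hh - 1) c' z) := by
    intro c rr
    by_cases hex : ∃ n, W n c rr
    · by_cases hcr : c = rr
      · exact ⟨c, G.refl c, fun hh hne => absurd hcr hne⟩
      · have hnf : W (Nat.find hex) c rr := Nat.find_spec hex
        have hnf0 : Nat.find hex ≠ 0 := by
          intro h0
          rw [h0] at hnf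
          exact hcr hnf
        obtain ⟨k, hk⟩ : ∃ k, Nat.find hex = k + 1 :=
          ⟨Nat.find hex - 1, by omega⟩
        rw [hk] at hnf
        rcases hnf with hnf | ⟨c', _, hadj, hrest⟩
        · exact absurd hnf hcr
        · refine ⟨c', hadj, fun hh hne => ?_⟩
          have hhe : hh = hex := Subsingleton.elim _ _
          subst hhe
          rw [hk]
          simp only [Nat.add_sub_cancel]
          rcases hrest with h | h
          · exact Or.inl h
          · exact Or.inr fun z hz => h z (Finset.mem_univ z) hz
    · exact ⟨c, G.refl c, fun hh => absurd hh hex⟩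
  set S : V → V → V := fun c rr => Classical.choose (hS c rr) with hSdef
  refine ⟨c0, S, fun c rr => (Classical.choose_spec (hS c rr)).1, ?_⟩
  intro rb hlegal
  have key : ∀ n k, W n (copSeq S c0 rb k) (rb k) → Catches S c0 rb := by
    intro n
    induction n using Nat.strong_induction_on with
    | _ n ih =>
    intro k hk
    by_cases heq : copSeq S c0 rb k = rb k
    · exact ⟨k, Or.inl heq⟩
    · have hex : ∃ m, W m (copSeq S c0 rb k) (rb k) := ⟨n, hk⟩
      have spec2 := (Classical.choose_spec (hS (copSeq S c0 rb k) (rb k))).2 hex heq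
      rcases spec2 with hcatch | hs
      · exact ⟨k, Or.inr hcatch⟩
      · have hnf0 : Nat.find hex ≠ 0 := by
          intro h0
          have := Nat.find_spec hex
          rw [h0] at this
          exact heq this
        have hle : Nat.find hex ≤ n := Nat.find_le hk
        have hlt : Nat.find hex - 1 < n := by omega
        exact ih _ hlt (k + 1) (hs (rb (k + 1)) (hlegal k))
  exact key N 0 (hwin (rb 0) (Finset.mem_univ _))
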